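/- Let E be a complex Banach space, let 1 ≤ r < ∞ and let 1 < s ≤ r' (where r' is the conjugate exponent of r, with r' = ∞ when r = 1). Then the family (⦀·⦀_n^{(r,s)} : n ∈ ℕ) is a dual multi-norm over E; that is, each ⦀·⦀_n^{(r,s)} is a norm on E^n, ⦀·⦀_1^{(r,s)} coincides with the norm of E, and for all n ≥ 2 and x_1,…,x_n ∈ E: (A1) ⦀(x_{σ(1)},…,x_{σ(n)})⦀_n^{(r,s)} = ⦀(x_1,…,x_n)⦀_n^{(r,s)} for every permutation σ; (A2) ⦀(α_1 x_1,…,α_n x_n)⦀_n^{(r,s)} ≤ (max_i |α_i|)·⦀(x_1,…,x_n)⦀_n^{(r,s)} for α_i ∈ ℂ; (A3) ⦀(x_1,…,x_{n-1},0)⦀_n^{(r,s)} = ⦀(x_1,…,x_{n-1})⦀_{n-1}^{(r,s)}; (B4) ⦀(x_1,…,x_{n-2},x_{n-1},x_{n-1})⦀_n^{(r,s)} = ⦀(x_1,…,x_{n-2},2x_{n-1})⦀_{n-1}^{(r,s)}. -/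

import Mathlib

open MeasureTheory NormedSpace Set
open scoped ENNReal NNReal

/-- The weak `r`-summing norm of an `n`-tuple in a normed space `F`. -/
noncomputable def muP {F : Type*} [NormedAddCommGroup F] [NormedSpace ℂ F]
    (r : ℝ) {n : ℕ} (y : Fin n → F) : ℝ :=
  sSup { c : ℝ | ∃ l : StrongDual ℂ F, ‖l‖ ≤ 1 ∧ c = (∑ i, ‖l (y i)‖ ^ r) ^ (1 / r) }

/-- The `ℓ^s`-norm of a tuple of complex numbers, `s ∈ (0,∞]` (the max norm when `s = ∞`). -/
noncomputable def lsNorm (s : ℝ≥0∞) {n : ℕ} (α : Fin n → ℂ) : ℝ :=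
  if s = ⊤ then ⨆ i, ‖α i‖ else (∑ i, ‖α i‖ ^ s.toReal) ^ (1 / s.toReal)

/-- The weak `(r,s)`-dual multi-norm:
`⦀x⦀_n^{(r,s)} = inf { ∑_k ‖α_k‖_s · μ_{r,n}(y_k) }` over all representations
`x = ∑_k M_{α_k}(y_k)` (coordinatewise, `x_i = ∑_k α_{k,i} • y_{k,i}`). -/
noncomputable def dualNorm {E : Type*} [NormedAddCommGroup E] [NormedSpace ℂ E]
    (r : ℝ) (s : ℝ≥0∞) {n : ℕ} (x : Fin n → E) : ℝ :=
  sInf { c : ℝ | ∃ (N : ℕ) (α : Fin N → Fin n → ℂ) (y : Fin N → Fin n → E),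
    (∀ i, x i = ∑ k, α k i • y k i) ∧ c = ∑ k, lsNorm s (α k) * muP r (y k) }

namespace Stmt3

open Finset

/-! ### real power helpers -/

lemma add_rpow_le_rpow_add' {x y p : ℝ} (hx : 0 ≤ x) (hy : 0 ≤ y) (hp : 1 ≤ p) :
    x ^ p + y ^ p ≤ (x + y) ^ p := by
  have := NNReal.add_rpow_le_rpow_add x.toNNReal y.toNNReal hp
  have h := NNReal.coe_le_coe.2 this
  push_cast [NNReal.coe_rpow] at h
  rwa [Real.coe_toNNReal _ hx, Real.coe_toNNReal _ hy] at h

/-- the conjugate exponent of `s` (equals `1` when `s = ⊤`). -/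
noncomputable def qe (s : ℝ≥0∞) : ℝ := if s = ⊤ then 1 else s.toReal / (s.toReal - 1)

section Exponents

variable {r : ℝ} {s : ℝ≥0∞}

lemma toReal_lt_one (hs : 1 < s) (hst : s ≠ ⊤) : 1 < s.toReal := by
  have := (ENNReal.toReal_lt_toReal (by simp) hst).2 hs
  simpa using this

lemma one_le_qe (hs : 1 < s) : 1 ≤ qe s := by
  unfold qe
  split_ifs with h
  · exact le_refl 1
  · have hp := toReal_lt_one hs h
    rw [le_div_iff₀ (by linarith)]
    linarith

lemma qe_pos (hs : 1 < s) : 0 < qe s := lt_of_lt_of_le zero_lt_one (one_le_qe hs)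

lemma qe_conj (hs : 1 < s) (hst : s ≠ ⊤) : (s.toReal).HolderConjugate (qe s) := by
  have hp := toReal_lt_one hs hst
  rw [Real.holderConjugate_iff]
  constructor
  · exact hp
  · unfold qe
    rw [if_neg hst]
    field_simp
    ring

lemma r_le_qe (hr : 1 ≤ r) (hs : 1 < s) (hsr : 1 ≤ s⁻¹ + (ENNReal.ofReal r)⁻¹) :
    r ≤ qe s := by
  by_cases hst : s = ⊤
  · subst hst
    simp only [ENNReal.inv_top, zero_add] at hsr
    have : ENNReal.ofReal r ≤ 1 := by
      rwa [ENNReal.one_le_inv] at hsr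
    have : r ≤ 1 := by rwa [ENNReal.ofReal_le_one] at this
    have : r = 1 := le_antisymm this hr
    simp [qe, this]
  · have hp := toReal_lt_one hs hst
    have hr0 : 0 < r := lt_of_lt_of_le zero_lt_one hr
    -- convert hsr to reals
    have hs0 : s ≠ 0 := by positivity
    have h1 : s⁻¹ ≠ ⊤ := by simp [hs0]
    have h2 : (ENNReal.ofReal r)⁻¹ ≠ ⊤ := by
      simp [ENNReal.ofReal_eq_zero, not_le, hr0]
    have := ENNReal.toReal_mono (by finiteness) hsr
    rw [ENNReal.toReal_add h1 h2, ENNReal.toReal_inv, ENNReal.toReal_inv,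
      ENNReal.toReal_ofReal hr0.le, ENNReal.toReal_one] at this
    -- this : 1 ≤ (s.toReal)⁻¹ + r⁻¹
    unfold qe
    rw [if_neg hst, le_div_iff₀ (by linarith)]
    have hptoReal : 0 < s.toReal := by linarith
    have this2 : 1 - (s.toReal)⁻¹ ≤ r⁻¹ := by linarith
    have h3 : (1 - (s.toReal)⁻¹) * r ≤ 1 := by
      calc (1 - (s.toReal)⁻¹) * r ≤ r⁻¹ * r := by
            apply mul_le_mul_of_nonneg_right this2 hr0.le
        _ = 1 := inv_mul_cancel₀ (ne_of_gt hr0)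
    calc r * (s.toReal - 1) = ((1 - (s.toReal)⁻¹) * r) * s.toReal := by
          field_simp
      _ ≤ 1 * s.toReal := by
          apply mul_le_mul_of_nonneg_right h3 hptoReal.le
      _ = s.toReal := one_mul _

end Exponents

/-! ### muP lemmas -/

section MuP
variable {E : Type*} [NormedAddCommGroup E] [NormedSpace ℂ E] {r : ℝ}

def muSet (r : ℝ) {n : ℕ} (y : Fin n → E) : Set ℝ :=
  { c : ℝ | ∃ l : StrongDual ℂ E, ‖l‖ ≤ 1 ∧ c = (∑ i, ‖l (y i)‖ ^ r) ^ (1 / r) }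

lemma muP_eq {n : ℕ} (y : Fin n → E) : muP r y = sSup (muSet r y) := rfl

lemma zero_mem_muSet (hr : 1 ≤ r) {n : ℕ} (y : Fin n → E) : (0:ℝ) ∈ muSet r y := by
  have hr0 : (0:ℝ) < r := lt_of_lt_of_le zero_lt_one hr
  refine ⟨0, by simp, ?_⟩
  have h1 : ∀ i : Fin n, ‖(0 : StrongDual ℂ E) (y i)‖ ^ r = 0 := fun i => by
    simp [Real.zero_rpow (ne_of_gt hr0)]
  rw [Finset.sum_congr rfl fun i _ => h1 i]
  simp [Real.zero_rpow (one_div_ne_zero (ne_of_gt hr0)),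
    Real.zero_rpow (inv_ne_zero (ne_of_gt hr0))]

lemma muSet_nonempty (hr : 1 ≤ r) {n : ℕ} (y : Fin n → E) : (muSet r y).Nonempty :=
  ⟨0, zero_mem_muSet hr y⟩

lemma muSet_bddAbove (hr : 1 ≤ r) {n : ℕ} (y : Fin n → E) : BddAbove (muSet r y) := by
  refine ⟨(∑ i, ‖y i‖ ^ r) ^ (1 / r), ?_⟩
  rintro c ⟨l, hl, rfl⟩
  apply Real.rpow_le_rpow (by positivity) ?_ (by positivity)
  apply Finset.sum_le_sum
  intro i _
  apply Real.rpow_le_rpow (norm_nonneg _) ?_ (by linarith)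
  calc ‖l (y i)‖ ≤ ‖l‖ * ‖y i‖ := l.le_opNorm _
    _ ≤ 1 * ‖y i‖ := mul_le_mul_of_nonneg_right hl (norm_nonneg _)
    _ = ‖y i‖ := one_mul _

lemma le_muP (hr : 1 ≤ r) {n : ℕ} (y : Fin n → E) {l : StrongDual ℂ E} (hl : ‖l‖ ≤ 1) :
    (∑ i, ‖l (y i)‖ ^ r) ^ (1 / r) ≤ muP r y :=
  le_csSup (muSet_bddAbove hr y) ⟨l, hl, rfl⟩

lemma muP_nonneg (hr : 1 ≤ r) {n : ℕ} (y : Fin n → E) : 0 ≤ muP r y :=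
  le_csSup (muSet_bddAbove hr y) (zero_mem_muSet hr y)

lemma le_muP_pow (hr : 1 ≤ r) {n : ℕ} (y : Fin n → E) {l : StrongDual ℂ E}
    (hl : ‖l‖ ≤ 1) : ∑ i, ‖l (y i)‖ ^ r ≤ (muP r y) ^ r := by
  have hr0 : (0:ℝ) < r := lt_of_lt_of_le zero_lt_one hr
  have h := le_muP hr y hl
  have h0 : (0:ℝ) ≤ (∑ i, ‖l (y i)‖ ^ r) ^ (1/r) := by positivity
  have h2 := Real.rpow_le_rpow h0 h (le_of_lt hr0)
  rwa [one_div, Real.rpow_inv_rpow (by positivity) (ne_of_gt hr0)] at h2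

lemma muP_le_bound (hr : 1 ≤ r) {n : ℕ} (y : Fin n → E) {B : ℝ} (hB : 0 ≤ B)
    (h : ∀ l : StrongDual ℂ E, ‖l‖ ≤ 1 → ∑ i, ‖l (y i)‖ ^ r ≤ B ^ r) :
    muP r y ≤ B := by
  have hr0 : (0:ℝ) < r := lt_of_lt_of_le zero_lt_one hr
  apply csSup_le (muSet_nonempty hr y)
  rintro c ⟨l, hl, rfl⟩
  have h2 := Real.rpow_le_rpow (by positivity) (h l hl) (by positivity : (0:ℝ) ≤ 1/r)
  rw [one_div, Real.rpow_rpow_inv hB (ne_of_gt hr0)] at h2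
  rwa [one_div]

lemma muP_le_muP (hr : 1 ≤ r) {m n : ℕ} (y' : Fin m → E) (y : Fin n → E)
    (h : ∀ l : StrongDual ℂ E, ‖l‖ ≤ 1 →
      ∑ i, ‖l (y' i)‖ ^ r ≤ ∑ i, ‖l (y i)‖ ^ r) :
    muP r y' ≤ muP r y :=
  muP_le_bound hr y' (muP_nonneg hr y) fun l hl => (h l hl).trans (le_muP_pow hr y hl)

lemma muP_const1 (hr : 1 ≤ r) (x : E) : muP r (fun _ : Fin 1 => x) = ‖x‖ := by
  have hr0 : (0:ℝ) < r := lt_of_lt_of_le zero_lt_one hr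
  apply le_antisymm
  · apply muP_le_bound hr _ (norm_nonneg x)
    intro l hl
    rw [Fin.sum_univ_one]
    apply Real.rpow_le_rpow (norm_nonneg _) ?_ (le_of_lt hr0)
    calc ‖l x‖ ≤ ‖l‖ * ‖x‖ := l.le_opNorm _
      _ ≤ 1 * ‖x‖ := mul_le_mul_of_nonneg_right hl (norm_nonneg _)
      _ = ‖x‖ := one_mul _
  · by_cases hx : x = 0
    · subst hx; simpa using muP_nonneg hr (fun _ : Fin 1 => (0:E))
    · obtain ⟨g, hg1, hgx⟩ := exists_dual_vector ℂ x (norm_ne_zero_iff.mpr hx)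
      have hmem : ‖x‖ ∈ muSet r (fun _ : Fin 1 => x) := by
        refine ⟨g, le_of_eq hg1, ?_⟩
        rw [Fin.sum_univ_one, hgx, RCLike.norm_ofReal, abs_norm, one_div,
          Real.rpow_rpow_inv (norm_nonneg x) (ne_of_gt hr0)]
      exact le_csSup (muSet_bddAbove hr _) hmem

lemma muP_diag_le (hr : 1 ≤ r) (m : ℕ) (v : E) :
    muP r (fun _ : Fin m => v) ≤ (m : ℝ) ^ (1/r) * ‖v‖ := by
  have hr0 : (0:ℝ) < r := lt_of_lt_of_le zero_lt_one hr
  apply muP_le_bound hr _ (by positivity)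
  intro l hl
  have hlv : ‖l v‖ ≤ ‖v‖ := by
    calc ‖l v‖ ≤ ‖l‖ * ‖v‖ := l.le_opNorm _
      _ ≤ 1 * ‖v‖ := mul_le_mul_of_nonneg_right hl (norm_nonneg _)
      _ = ‖v‖ := one_mul _
  calc ∑ _i : Fin m, ‖l v‖ ^ r = (m:ℝ) * ‖l v‖ ^ r := by
        rw [Finset.sum_const, Finset.card_univ, Fintype.card_fin, nsmul_eq_mul]
    _ ≤ (m:ℝ) * ‖v‖ ^ r := by
        apply mul_le_mul_of_nonneg_left
          (Real.rpow_le_rpow (norm_nonneg _) hlv (le_of_lt hr0)) (by positivity)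
    _ = ((m : ℝ) ^ (1/r) * ‖v‖) ^ r := by
        rw [Real.mul_rpow (by positivity) (norm_nonneg v), one_div,
          Real.rpow_inv_rpow (by positivity) (ne_of_gt hr0)]

end MuP

/-! ### phase -/

noncomputable def phase (z : ℂ) : ℂ := if z = 0 then 0 else (‖z‖ : ℂ) / z

lemma phase_mul (z : ℂ) : phase z * z = (‖z‖ : ℂ) := by
  unfold phase
  split_ifs with h
  · simp [h]
  · exact div_mul_cancel₀ _ h

lemma norm_phase_le (z : ℂ) : ‖phase z‖ ≤ 1 := by
  unfold phase
  split_ifs with h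
  · simp
  · rw [norm_div]
    rw [show ‖((‖z‖:ℝ):ℂ)‖ = ‖z‖ by simp]
    rw [div_self (norm_ne_zero_iff.2 h)]

lemma phase_zero : phase 0 = 0 := by simp [phase]

/-! ### lsNorm lemmas -/

section LsNorm
variable {s : ℝ≥0∞}

lemma lsNorm_nonneg (s : ℝ≥0∞) {m : ℕ} (α : Fin m → ℂ) : 0 ≤ lsNorm s α := by
  unfold lsNorm; split_ifs
  · exact Real.iSup_nonneg fun i => norm_nonneg _
  · positivity

lemma lsNorm_const_mul (hs : 1 < s) (c : ℂ) {m : ℕ} (α : Fin m → ℂ) :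
    lsNorm s (fun i => c * α i) = ‖c‖ * lsNorm s α := by
  unfold lsNorm; split_ifs with h
  · simp only [norm_mul]
    exact (Real.mul_iSup_of_nonneg (norm_nonneg c) _).symm
  · have hp : 1 < s.toReal := toReal_lt_one hs h
    have hp0 : s.toReal ≠ 0 := ne_of_gt (by linarith)
    simp only [norm_mul]
    calc (∑ i, (‖c‖*‖α i‖)^s.toReal)^(1/s.toReal)
        = (‖c‖^s.toReal * ∑ i, ‖α i‖^s.toReal)^(1/s.toReal) := by
          rw [Finset.mul_sum]
          congr 1
          refine Finset.sum_congr rfl fun i _ => ?_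
          rw [Real.mul_rpow (norm_nonneg c) (norm_nonneg _)]
      _ = ‖c‖ * (∑ i, ‖α i‖^s.toReal)^(1/s.toReal) := by
          rw [Real.mul_rpow (by positivity) (by positivity), one_div,
            Real.rpow_rpow_inv (norm_nonneg c) hp0]

lemma lsNorm_single (hs : 1 < s) {m : ℕ} (i0 : Fin m) :
    lsNorm s (fun i => if i = i0 then (1:ℂ) else 0) = 1 := by
  have : Nonempty (Fin m) := ⟨i0⟩
  unfold lsNorm; split_ifs with h
  · apply le_antisymm
    · apply ciSup_le; intro i; by_cases hi : i = i0 <;> simp [hi]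
    · have h2 := le_ciSup
        (Set.Finite.bddAbove (Set.finite_range fun i => ‖if i = i0 then (1:ℂ) else 0‖)) i0
      simpa using h2
  · have hp : 1 < s.toReal := toReal_lt_one hs h
    have h2 : ∀ i : Fin m, ‖if i = i0 then (1:ℂ) else 0‖ ^ s.toReal
        = if i = i0 then (1:ℝ) else 0 := by
      intro i; split_ifs <;>
        simp [Real.zero_rpow (ne_of_gt (by linarith : (0:ℝ) < s.toReal))]
    rw [Finset.sum_congr rfl (fun i _ => h2 i)]
    simp

lemma lsNorm_one1 (hs : 1 < s) : lsNorm s (fun _ : Fin 1 => (1:ℂ)) = 1 := by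
  have h := lsNorm_single hs (0 : Fin 1)
  have h2 : (fun i : Fin 1 => if i = 0 then (1:ℂ) else 0) = fun _ : Fin 1 => (1:ℂ) := by
    funext i
    simp [Subsingleton.elim i 0]
  rwa [h2] at h

/-! ### Hölder and its sharpness -/

lemma hold (hs : 1 < s) {m : ℕ} (α : Fin m → ℂ) (t : Fin m → ℝ) (ht : ∀ i, 0 ≤ t i) :
    ∑ i, ‖α i‖ * t i ≤ lsNorm s α * (∑ i, t i ^ qe s) ^ (1 / qe s) := by
  by_cases hst : s = ⊤
  · subst hst
    have e1 : qe (⊤:ℝ≥0∞) = 1 := by simp [qe]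
    have e2 : lsNorm (⊤:ℝ≥0∞) α = ⨆ j, ‖α j‖ := by simp [lsNorm]
    rw [e1, e2]
    simp only [Real.rpow_one, one_div_one]
    calc ∑ i, ‖α i‖ * t i ≤ ∑ i, (⨆ j, ‖α j‖) * t i := by
          refine Finset.sum_le_sum fun i _ => ?_
          exact mul_le_mul_of_nonneg_right
            (le_ciSup (f := fun j => ‖α j‖) (Set.Finite.bddAbove (Set.finite_range _)) i) (ht i)
      _ = (⨆ j, ‖α j‖) * ∑ i, t i := by rw [Finset.mul_sum]
  · have hpq := qe_conj hs hst
    have h := Real.inner_le_Lp_mul_Lq_of_nonneg Finset.univ hpq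
      (fun i _ => norm_nonneg (α i)) (fun i _ => ht i)
    simpa [lsNorm, if_neg hst] using h

lemma sharp (hs : 1 < s) {m : ℕ} (t : Fin m → ℂ) {C : ℝ} (hC : 0 ≤ C)
    (h : ∀ α : Fin m → ℂ, ‖∑ i, α i * t i‖ ≤ lsNorm s α * C) :
    (∑ i, ‖t i‖ ^ qe s) ^ (1 / qe s) ≤ C := by
  by_cases hst : s = ⊤
  · subst hst
    have e1 : qe (⊤:ℝ≥0∞) = 1 := by simp [qe]
    rw [e1]
    simp only [Real.rpow_one, one_div_one]
    have h2 := h (fun i => phase (t i))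
    have h3 : ∑ i, phase (t i) * t i = ((∑ i, ‖t i‖ : ℝ) : ℂ) := by
      push_cast
      exact Finset.sum_congr rfl fun i _ => phase_mul (t i)
    rw [h3] at h2
    have h4 : ‖((∑ i, ‖t i‖ : ℝ) : ℂ)‖ = ∑ i, ‖t i‖ := by
      rw [Complex.norm_real,
        Real.norm_of_nonneg (Finset.sum_nonneg fun i _ => norm_nonneg (t i))]
    rw [h4] at h2
    have h5 : lsNorm ⊤ (fun i => phase (t i)) ≤ 1 := by
      unfold lsNorm
      rw [if_pos rfl]
      exact Real.iSup_le (fun i => norm_phase_le _) zero_le_one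
    calc ∑ i, ‖t i‖ ≤ lsNorm ⊤ (fun i => phase (t i)) * C := h2
      _ ≤ 1 * C := mul_le_mul_of_nonneg_right h5 hC
      _ = C := one_mul C
  · have hpq := qe_conj hs hst
    set p := s.toReal with hp_def
    set q := qe s with hq_def
    have hp1 : 1 < p := hpq.lt
    have hq1 : 1 < q := hpq.symm.lt
    have hq0 : q ≠ 0 := ne_of_gt (by linarith)
    have hp0 : p ≠ 0 := ne_of_gt (by linarith)
    set T := ∑ i, ‖t i‖ ^ q with hT_def
    have hT0 : 0 ≤ T := Finset.sum_nonneg fun i _ => by positivity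
    rcases eq_or_lt_of_le hT0 with hT | hT
    · rw [← hT, Real.zero_rpow (by positivity)]
      exact hC
    · set α := fun i => phase (t i) * ((‖t i‖ ^ (q - 1) : ℝ) : ℂ) with hα_def
      have hat : ∀ i, α i * t i = ((‖t i‖ ^ q : ℝ) : ℂ) := by
        intro i
        by_cases hti : t i = 0
        · simp [hα_def, hti, phase_zero, Real.zero_rpow hq0]
        · have h5 : α i * t i
              = ((‖t i‖ ^ (q-1) : ℝ) : ℂ) * (phase (t i) * t i) := by
            rw [hα_def]; ring
          rw [h5, phase_mul, ← Complex.ofReal_mul]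
          congr 1
          rw [show ‖t i‖ ^ (q-1) * ‖t i‖ = ‖t i‖ ^ (q-1) * ‖t i‖ ^ (1:ℝ) by
            rw [Real.rpow_one]]
          rw [← Real.rpow_add' (norm_nonneg _) (by
            rw [sub_add_cancel]; exact hq0)]
          congr 1
          ring
      have hqp : (q - 1) * p = q := by
        have hpne : p - 1 ≠ 0 := ne_of_gt (by linarith)
        rw [hq_def]
        unfold qe
        rw [if_neg hst, ← hp_def]
        field_simp
        ring
      have hαn : ∀ i, ‖α i‖ ^ p = ‖t i‖ ^ q := by
        intro i
        by_cases hti : t i = 0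
        · simp [hα_def, hti, phase_zero, Real.zero_rpow hq0, Real.zero_rpow hp0]
        · have hph : ‖phase (t i)‖ = 1 := by
            unfold phase
            rw [if_neg hti, norm_div]
            rw [show ‖((‖t i‖:ℝ):ℂ)‖ = ‖t i‖ by simp]
            rw [div_self (norm_ne_zero_iff.2 hti)]
          rw [hα_def]
          simp only [norm_mul, hph, one_mul]
          rw [show ‖((‖t i‖ ^ (q-1) : ℝ) : ℂ)‖ = ‖t i‖ ^ (q-1) by
            rw [Complex.norm_real,
              Real.norm_of_nonneg (Real.rpow_nonneg (norm_nonneg _) _)]]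
          rw [← Real.rpow_mul (norm_nonneg (t i)), hqp]
      have hαsum : ∑ i, ‖α i‖ ^ p = T := by
        rw [hT_def]
        exact Finset.sum_congr rfl fun i _ => hαn i
      have hls : lsNorm s α = T ^ (1/p) := by
        unfold lsNorm
        rw [if_neg hst, ← hp_def, hαsum]
      have h2 := h α
      have h3 : ∑ i, α i * t i = ((T:ℝ):ℂ) := by
        rw [hT_def]
        push_cast
        exact Finset.sum_congr rfl fun i _ => hat i
      rw [h3, hls] at h2
      have h4 : ‖((T:ℝ):ℂ)‖ = T := by
        rw [Complex.norm_real, Real.norm_of_nonneg hT0]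
      rw [h4] at h2
      have hkey : T ^ (1/p) * T ^ (1/q) = T := by
        rw [one_div, one_div, ← Real.rpow_add hT, hpq.inv_add_inv_eq_one, Real.rpow_one]
      have hppos : (0:ℝ) < T ^ (1/p) := Real.rpow_pos_of_pos hT _
      have h6 : T ^ (1/p) * T ^ (1/q) ≤ T ^ (1/p) * C := by
        rw [hkey]; exact h2
      exact le_of_mul_le_mul_left h6 hppos

end LsNorm


/-! ### dualNorm basics -/

section DualNorm
variable {E : Type*} [NormedAddCommGroup E] [NormedSpace ℂ E] {r : ℝ} {s : ℝ≥0∞}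

def dSet (r : ℝ) (s : ℝ≥0∞) {n : ℕ} (x : Fin n → E) : Set ℝ :=
  { c : ℝ | ∃ (N : ℕ) (α : Fin N → Fin n → ℂ) (y : Fin N → Fin n → E),
    (∀ i, x i = ∑ k, α k i • y k i) ∧ c = ∑ k, lsNorm s (α k) * muP r (y k) }

lemma dualNorm_eq {n : ℕ} (x : Fin n → E) : dualNorm r s x = sInf (dSet r s x) := rfl

lemma dSet_nonempty {n : ℕ} (x : Fin n → E) : (dSet r s x).Nonempty := by
  refine ⟨_, n, (fun k i => if i = k then 1 else 0), (fun k _ => x k), fun i => ?_, rfl⟩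
  rw [show (∑ k, (if i = k then (1:ℂ) else 0) • x k) = ∑ k, (if i = k then x k else 0) by
    refine Finset.sum_congr rfl fun k _ => ?_
    split_ifs <;> simp]
  rw [Finset.sum_ite_eq Finset.univ i x]
  simp

lemma dSet_nonneg (hr : 1 ≤ r) {n : ℕ} (x : Fin n → E) : ∀ c ∈ dSet r s x, 0 ≤ c := by
  rintro c ⟨N, α, y, -, rfl⟩
  exact Finset.sum_nonneg fun k _ => mul_nonneg (lsNorm_nonneg s _) (muP_nonneg hr _)

lemma dSet_bddBelow (hr : 1 ≤ r) {n : ℕ} (x : Fin n → E) : BddBelow (dSet r s x) :=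
  ⟨0, fun c hc => dSet_nonneg hr x c hc⟩

lemma dualNorm_nonneg (hr : 1 ≤ r) {n : ℕ} (x : Fin n → E) : 0 ≤ dualNorm r s x :=
  le_csInf (dSet_nonempty x) (dSet_nonneg hr x)

lemma dualNorm_le_rep (hr : 1 ≤ r) {n N : ℕ} (x : Fin n → E) (α : Fin N → Fin n → ℂ)
    (y : Fin N → Fin n → E) (hx : ∀ i, x i = ∑ k, α k i • y k i) :
    dualNorm r s x ≤ ∑ k, lsNorm s (α k) * muP r (y k) :=
  csInf_le (dSet_bddBelow hr x) ⟨N, α, y, hx, rfl⟩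

lemma dualNorm_single_term (hr : 1 ≤ r) {n : ℕ} (α : Fin n → ℂ) (y : Fin n → E) :
    dualNorm r s (fun i => α i • y i) ≤ lsNorm s α * muP r y := by
  have h := dualNorm_le_rep (s := s) hr (fun i => α i • y i)
    (fun _ : Fin 1 => α) (fun _ : Fin 1 => y) (fun i => by rw [Fin.sum_univ_one])
  simpa using h

lemma dualNorm_zero (hr : 1 ≤ r) {n : ℕ} : dualNorm r s (0 : Fin n → E) = 0 := by
  apply le_antisymm
  · have h := dualNorm_le_rep (s := s) hr (0 : Fin n → E)
      (fun _ : Fin 0 => 0) (fun _ : Fin 0 => 0) (fun i => by simp)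
    simpa using h
  · exact dualNorm_nonneg hr _

lemma le_dualNorm_of_P (hr : 1 ≤ r) (hs : 1 < s) {n : ℕ}
    (lam : Fin n → StrongDual ℂ E)
    (hlam : ∀ y : Fin n → E, ∑ i, ‖lam i (y i)‖ ^ qe s ≤ (muP r y) ^ qe s)
    (x : Fin n → E) : ‖∑ i, lam i (x i)‖ ≤ dualNorm r s x := by
  apply le_csInf (dSet_nonempty x)
  rintro c ⟨N, α, y, hx, rfl⟩
  have hswap : ∑ i, lam i (x i) = ∑ k, ∑ i, α k i * lam i (y k i) := by
    calc ∑ i, lam i (x i) = ∑ i, ∑ k, α k i * lam i (y k i) := by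
          refine Finset.sum_congr rfl fun i _ => ?_
          rw [hx i, map_sum]
          refine Finset.sum_congr rfl fun k _ => ?_
          rw [(lam i).map_smul]
          rfl
      _ = ∑ k, ∑ i, α k i * lam i (y k i) := Finset.sum_comm
  rw [hswap]
  calc ‖∑ k, ∑ i, α k i * lam i (y k i)‖ ≤ ∑ k, ‖∑ i, α k i * lam i (y k i)‖ :=
        norm_sum_le _ _
    _ ≤ ∑ k, lsNorm s (α k) * muP r (y k) := by
        refine Finset.sum_le_sum fun k _ => ?_
        calc ‖∑ i, α k i * lam i (y k i)‖ ≤ ∑ i, ‖α k i * lam i (y k i)‖ :=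
              norm_sum_le _ _
          _ = ∑ i, ‖α k i‖ * ‖lam i (y k i)‖ :=
              Finset.sum_congr rfl fun i _ => norm_mul _ _
          _ ≤ lsNorm s (α k) * (∑ i, ‖lam i (y k i)‖ ^ qe s) ^ (1 / qe s) :=
              hold hs _ _ (fun i => norm_nonneg _)
          _ ≤ lsNorm s (α k) * muP r (y k) := by
              apply mul_le_mul_of_nonneg_left ?_ (lsNorm_nonneg s _)
              have h1 := hlam (y k)
              have h2 := Real.rpow_le_rpow
                (Finset.sum_nonneg fun i _ => Real.rpow_nonneg (norm_nonneg _) _) h1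
                (inv_nonneg.2 (le_of_lt (qe_pos hs)))
              rw [Real.rpow_rpow_inv (muP_nonneg hr _) (ne_of_gt (qe_pos hs))] at h2
              rw [one_div]
              exact h2

lemma norm_le_dualNorm (hr : 1 ≤ r) (hs : 1 < s) {n : ℕ} (x : Fin n → E) (i0 : Fin n) :
    ‖x i0‖ ≤ dualNorm r s x := by
  by_cases hx : x i0 = 0
  · rw [hx, norm_zero]; exact dualNorm_nonneg hr x
  · obtain ⟨g, hg1, hgx⟩ := exists_dual_vector ℂ (x i0) (norm_ne_zero_iff.mpr hx)
    set lam : Fin n → StrongDual ℂ E :=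
      Function.update (0 : Fin n → StrongDual ℂ E) i0 g with hlam_def
    have hq0 : qe s ≠ 0 := ne_of_gt (qe_pos hs)
    have hP : ∀ y : Fin n → E, ∑ i, ‖lam i (y i)‖ ^ qe s ≤ (muP r y) ^ qe s := by
      intro y
      have hsum : ∑ i, ‖lam i (y i)‖ ^ qe s = ‖g (y i0)‖ ^ qe s := by
        rw [Finset.sum_eq_single i0]
        · rw [hlam_def, Function.update_self]
        · intro b _ hb
          rw [hlam_def, Function.update_of_ne hb]
          simp [Real.zero_rpow hq0]
        · intro h; exact absurd (Finset.mem_univ i0) h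
      rw [hsum]
      apply Real.rpow_le_rpow (norm_nonneg _) ?_ (le_of_lt (qe_pos hs))
      have hr0 : (0:ℝ) < r := lt_of_lt_of_le zero_lt_one hr
      have h1 : ‖g (y i0)‖ ^ r ≤ ∑ i, ‖g (y i)‖ ^ r :=
        Finset.single_le_sum (f := fun i => ‖g (y i)‖ ^ r)
          (fun i _ => Real.rpow_nonneg (norm_nonneg _) _) (Finset.mem_univ i0)
      have h2 : (‖g (y i0)‖ ^ r) ^ (1/r) ≤ (∑ i, ‖g (y i)‖ ^ r) ^ (1/r) :=
        Real.rpow_le_rpow (Real.rpow_nonneg (norm_nonneg _) _) h1 (by positivity)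
      rw [one_div, Real.rpow_rpow_inv (norm_nonneg _) (ne_of_gt hr0), ← one_div] at h2
      exact h2.trans (le_muP hr y (le_of_eq hg1))
    have h4 := le_dualNorm_of_P hr hs lam hP x
    have h5 : ∑ i, lam i (x i) = g (x i0) := by
      rw [Finset.sum_eq_single i0]
      · rw [hlam_def, Function.update_self]
      · intro b _ hb; rw [hlam_def, Function.update_of_ne hb]; simp
      · intro h; exact absurd (Finset.mem_univ i0) h
    rw [h5, hgx, RCLike.norm_ofReal, abs_norm] at h4
    exact h4

lemma dualNorm_add_le (hr : 1 ≤ r) {n : ℕ} (x y : Fin n → E) :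
    dualNorm r s (x + y) ≤ dualNorm r s x + dualNorm r s y := by
  apply le_of_forall_pos_le_add
  intro ε hε
  obtain ⟨cx, hcxmem, hcx2⟩ := Real.lt_sInf_add_pos (dSet_nonempty (r := r) (s := s) x) (half_pos hε)
  obtain ⟨cy, hcymem, hcy2⟩ := Real.lt_sInf_add_pos (dSet_nonempty (r := r) (s := s) y) (half_pos hε)
  rw [← dualNorm_eq] at hcx2 hcy2
  obtain ⟨N1, α1, y1, hx1, rfl⟩ := hcxmem
  obtain ⟨N2, α2, y2, hx2, rfl⟩ := hcymem
  have hrep : ∀ i, (x + y) i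
      = ∑ k : Fin (N1 + N2), (Fin.append α1 α2) k i • (Fin.append y1 y2) k i := by
    intro i
    rw [Fin.sum_univ_add]
    simp only [Fin.append_left, Fin.append_right]
    rw [Pi.add_apply, hx1 i, hx2 i]
  have hcost : (∑ k : Fin (N1+N2),
        lsNorm s ((Fin.append α1 α2) k) * muP r ((Fin.append y1 y2) k))
      = (∑ k, lsNorm s (α1 k) * muP r (y1 k))
        + (∑ k, lsNorm s (α2 k) * muP r (y2 k)) := by
    rw [Fin.sum_univ_add]
    simp only [Fin.append_left, Fin.append_right]
  have h := dualNorm_le_rep (s := s) hr (x + y) _ _ hrep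
  rw [hcost] at h
  calc dualNorm r s (x+y) ≤ _ := h
    _ ≤ (dualNorm r s x + ε/2) + (dualNorm r s y + ε/2) :=
        add_le_add (le_of_lt hcx2) (le_of_lt hcy2)
    _ = dualNorm r s x + dualNorm r s y + ε := by ring

lemma dualNorm_smul_le (hr : 1 ≤ r) (hs : 1 < s) {n : ℕ} (c : ℂ) (x : Fin n → E) :
    dualNorm r s (c • x) ≤ ‖c‖ * dualNorm r s x := by
  by_cases hc : c = 0
  · subst hc
    rw [zero_smul]
    simp [dualNorm_zero (s := s) hr]
  · have key : ∀ b ∈ dSet r s x, dualNorm r s (c • x) ≤ ‖c‖ * b := by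
      rintro b ⟨N, α, y, hx, rfl⟩
      have hrep : ∀ i, (c • x) i = ∑ k, (c * α k i) • y k i := by
        intro i
        rw [Pi.smul_apply, hx i, Finset.smul_sum]
        refine Finset.sum_congr rfl fun k _ => ?_
        rw [smul_smul]
      have h2 := dualNorm_le_rep (s := s) hr (c • x) (fun k i => c * α k i) y hrep
      calc dualNorm r s (c • x) ≤ ∑ k, lsNorm s (fun i => c * α k i) * muP r (y k) := h2
        _ = ‖c‖ * ∑ k, lsNorm s (α k) * muP r (y k) := by
            rw [Finset.mul_sum]
            refine Finset.sum_congr rfl fun k _ => ?_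
            rw [lsNorm_const_mul hs, mul_assoc]
    have h0 : (0:ℝ) < ‖c‖ := norm_pos_iff.2 hc
    have h3 : dualNorm r s (c • x) / ‖c‖ ≤ dualNorm r s x := by
      apply le_csInf (dSet_nonempty x)
      intro b hb
      rw [div_le_iff₀ h0]
      calc dualNorm r s (c•x) ≤ ‖c‖ * b := key b hb
        _ = b * ‖c‖ := mul_comm _ _
    calc dualNorm r s (c • x) = (dualNorm r s (c•x) / ‖c‖) * ‖c‖ :=
          (div_mul_cancel₀ _ (ne_of_gt h0)).symm
      _ ≤ dualNorm r s x * ‖c‖ := mul_le_mul_of_nonneg_right h3 (le_of_lt h0)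
      _ = ‖c‖ * dualNorm r s x := mul_comm _ _

lemma dualNorm_smul (hr : 1 ≤ r) (hs : 1 < s) {n : ℕ} (c : ℂ) (x : Fin n → E) :
    dualNorm r s (c • x) = ‖c‖ * dualNorm r s x := by
  by_cases hc : c = 0
  · subst hc
    rw [zero_smul]
    simp [dualNorm_zero (s := s) hr]
  · apply le_antisymm (dualNorm_smul_le hr hs c x)
    have h1 := dualNorm_smul_le hr hs c⁻¹ (c • x)
    rw [smul_smul, inv_mul_cancel₀ hc, one_smul, norm_inv] at h1
    have h0 : (0:ℝ) < ‖c‖ := norm_pos_iff.2 hc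
    calc ‖c‖ * dualNorm r s x ≤ ‖c‖ * (‖c‖⁻¹ * dualNorm r s (c • x)) :=
          mul_le_mul_of_nonneg_left h1 (norm_nonneg c)
      _ = dualNorm r s (c • x) := by
          rw [← mul_assoc, mul_inv_cancel₀ (ne_of_gt h0), one_mul]

lemma dualNorm_eq_zero_iff (hr : 1 ≤ r) (hs : 1 < s) {n : ℕ} (x : Fin n → E) :
    dualNorm r s x = 0 ↔ x = 0 := by
  constructor
  · intro h
    funext i
    have h1 := norm_le_dualNorm hr hs x i
    rw [h] at h1
    have := le_antisymm h1 (norm_nonneg _)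
    simpa using norm_eq_zero.1 this
  · rintro rfl
    exact dualNorm_zero hr

end DualNorm


/-! ### Hahn–Banach extraction -/

def DN (r : ℝ) (s : ℝ≥0∞) (n : ℕ) (E : Type*) [NormedAddCommGroup E] [NormedSpace ℂ E] :=
  Fin n → E

def toDN (r : ℝ) (s : ℝ≥0∞) {n : ℕ} {E : Type*} [NormedAddCommGroup E] [NormedSpace ℂ E]
    (v : Fin n → E) : DN r s n E := v

section HB
variable {E : Type*} [NormedAddCommGroup E] [NormedSpace ℂ E] {r : ℝ} {s : ℝ≥0∞}

lemma dualNorm_pi_single_le (hr : 1 ≤ r) (hs : 1 < s) {n : ℕ} (i0 : Fin n) (v : E) :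
    dualNorm r s (Pi.single i0 v) ≤ (n:ℝ)^(1/r) * ‖v‖ := by
  have hrep : ∀ i, (Pi.single i0 v : Fin n → E) i
      = ∑ _k : Fin 1, (if i = i0 then (1:ℂ) else 0) • v := by
    intro i
    rw [Fin.sum_univ_one]
    by_cases hi : i = i0
    · subst hi; simp
    · simp [Pi.single_eq_of_ne hi, hi]
  have h := dualNorm_le_rep (s := s) hr (Pi.single i0 v)
    (fun _ : Fin 1 => fun i => if i = i0 then (1:ℂ) else 0)
    (fun _ : Fin 1 => fun _ : Fin n => v) hrep
  rw [Fin.sum_univ_one] at h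
  calc dualNorm r s (Pi.single i0 v)
      ≤ lsNorm s (fun i => if i = i0 then (1:ℂ) else 0) * muP r (fun _ : Fin n => v) := h
    _ = muP r (fun _ : Fin n => v) := by rw [lsNorm_single hs, one_mul]
    _ ≤ (n:ℝ)^(1/r) * ‖v‖ := muP_diag_le hr n v

lemma exists_P_rep (hr : 1 ≤ r) (hs : 1 < s) {n : ℕ} (x : Fin n → E) :
    ∃ lam : Fin n → StrongDual ℂ E,
      (∀ y : Fin n → E, ∑ i, ‖lam i (y i)‖ ^ qe s ≤ (muP r y) ^ qe s) ∧
      ‖∑ i, lam i (x i)‖ = dualNorm r s x := by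
  have hq0 : qe s ≠ 0 := ne_of_gt (qe_pos hs)
  by_cases hx : x = 0
  · subst hx
    refine ⟨0, ?_, ?_⟩
    · intro y
      have h1 : ∀ i : Fin n, ‖(0 : Fin n → StrongDual ℂ E) i (y i)‖ ^ qe s = 0 :=
        fun i => by simp [Real.zero_rpow hq0]
      rw [Finset.sum_congr rfl fun i _ => h1 i, Finset.sum_const, smul_zero]
      exact Real.rpow_nonneg (muP_nonneg hr y) _
    · simp [dualNorm_zero (s := s) hr]
  · letI : AddCommGroup (DN r s n E) := inferInstanceAs (AddCommGroup (Fin n → E))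
    letI : Module ℂ (DN r s n E) := inferInstanceAs (Module ℂ (Fin n → E))
    letI : Norm (DN r s n E) := ⟨fun w => dualNorm r s (show Fin n → E from w)⟩
    have hcore : NormedSpace.Core ℂ (DN r s n E) :=
      { norm_nonneg := fun w => dualNorm_nonneg hr _
        norm_smul := fun c w => dualNorm_smul hr hs c _
        norm_triangle := fun w v => dualNorm_add_le hr _ _
        norm_eq_zero_iff := fun w => dualNorm_eq_zero_iff hr hs _ }
    letI : NormedAddCommGroup (DN r s n E) := NormedAddCommGroup.ofCore hcore
    letI : NormedSpace ℂ (DN r s n E) := NormedSpace.ofCore hcore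
    have hx' : toDN r s x ≠ 0 := hx
    obtain ⟨g, hg1, hgx⟩ := exists_dual_vector ℂ (toDN r s x) (norm_ne_zero_iff.mpr hx')
    have hnorm_eq : ∀ v : Fin n → E, ‖toDN r s v‖ = dualNorm r s v := fun v => rfl
    have hb : ∀ (i : Fin n) (v : E),
        ‖g (toDN r s (Pi.single i v))‖ ≤ (n:ℝ)^(1/r) * ‖v‖ := by
      intro i v
      calc ‖g (toDN r s (Pi.single i v))‖
          ≤ ‖g‖ * ‖toDN r s (Pi.single i v)‖ := g.le_opNorm _
        _ = dualNorm r s (Pi.single i v) := by rw [hg1, one_mul, hnorm_eq]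
        _ ≤ (n:ℝ)^(1/r) * ‖v‖ := dualNorm_pi_single_le hr hs i v
    set lam : Fin n → StrongDual ℂ E := fun i =>
      LinearMap.mkContinuous
        { toFun := fun v => g (toDN r s (Pi.single i v))
          map_add' := fun v w => by
            have h1 : toDN r s (Pi.single i (v + w))
                = toDN r s (Pi.single i v) + toDN r s (Pi.single i w) := by
              show (Pi.single i (v + w) : Fin n → E)
                  = (Pi.single i v : Fin n → E) + (Pi.single i w : Fin n → E)
              exact Pi.single_add (f := fun _ : Fin n => E) i v w
            rw [h1, map_add]
          map_smul' := fun c v => by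
            have h1 : toDN r s (Pi.single i (c • v))
                = c • toDN r s (Pi.single i v) := by
              show (Pi.single i (c • v) : Fin n → E) = c • (Pi.single i v : Fin n → E)
              exact Pi.single_smul (f := fun _ : Fin n => E) i c v
            rw [h1, ContinuousLinearMap.map_smul, RingHom.id_apply] }
        ((n:ℝ)^(1/r)) (fun v => hb i v) with hlam_def
    have hlam_apply : ∀ (i : Fin n) (v : E),
        lam i v = g (toDN r s (Pi.single i v)) := fun i v => rfl
    have hkey : ∀ (β : Fin n → ℂ) (y : Fin n → E),
        ∑ i, β i * lam i (y i) = g (toDN r s (fun i => β i • y i)) := by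
      intro β y
      have e1 : ∀ i, β i * lam i (y i)
          = g (toDN r s (Pi.single i (β i • y i))) := by
        intro i
        have h1 : toDN r s (Pi.single i (β i • y i))
            = β i • toDN r s (Pi.single i (y i)) := by
          show (Pi.single i (β i • y i) : Fin n → E) = β i • (Pi.single i (y i) : Fin n → E)
          exact Pi.single_smul (f := fun _ : Fin n => E) i (β i) (y i)
        rw [h1, ContinuousLinearMap.map_smul, hlam_apply]
        rfl
      have e2 : toDN r s (fun i => β i • y i)
          = ∑ i, toDN r s (Pi.single i (β i • y i)) := by
        show (fun i => β i • y i) = ∑ i, (Pi.single i (β i • y i) : Fin n → E)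
        exact (Finset.univ_sum_single _).symm
      rw [Finset.sum_congr rfl fun i _ => e1 i, ← map_sum, ← e2]
    refine ⟨lam, ?_, ?_⟩
    · intro y
      have hα : ∀ β : Fin n → ℂ, ‖∑ i, β i * lam i (y i)‖ ≤ lsNorm s β * muP r y := by
        intro β
        rw [hkey β y]
        calc ‖g (toDN r s (fun i => β i • y i))‖
            ≤ ‖g‖ * ‖toDN r s (fun i => β i • y i)‖ := g.le_opNorm _
          _ = dualNorm r s (fun i => β i • y i) := by rw [hg1, one_mul, hnorm_eq]
          _ ≤ lsNorm s β * muP r y := dualNorm_single_term hr β y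
      have h7 := sharp hs (fun i => lam i (y i)) (muP_nonneg hr y) hα
      have hsum0 : (0:ℝ) ≤ ∑ i, ‖lam i (y i)‖ ^ qe s :=
        Finset.sum_nonneg fun i _ => Real.rpow_nonneg (norm_nonneg _) _
      have h8 := Real.rpow_le_rpow (Real.rpow_nonneg hsum0 _) h7 (le_of_lt (qe_pos hs))
      rwa [one_div, Real.rpow_inv_rpow hsum0 hq0] at h8
    · have e3 : ∑ i, lam i (x i) = g (toDN r s x) := by
        have h1 := hkey (fun _ => 1) x
        simpa using h1
      rw [e3, hgx]
      rw [RCLike.norm_ofReal, abs_norm, hnorm_eq]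

end HB


/-! ### power-form conversion helpers -/

lemma pow_form_le {q S C : ℝ} (hq : 0 < q) (hS : 0 ≤ S) (_hC : 0 ≤ C)
    (h : S ^ (1/q) ≤ C) : S ≤ C ^ q := by
  have h2 := Real.rpow_le_rpow (Real.rpow_nonneg hS _) h hq.le
  rwa [one_div, Real.rpow_inv_rpow hS (ne_of_gt hq)] at h2

lemma le_pow_form {q S C : ℝ} (hq : 0 < q) (hS : 0 ≤ S) (hC : 0 ≤ C)
    (h : S ≤ C ^ q) : S ^ (1/q) ≤ C := by
  have h2 := Real.rpow_le_rpow hS h (by positivity : (0:ℝ) ≤ 1/q)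
  rw [one_div, Real.rpow_rpow_inv hC (ne_of_gt hq)] at h2
  rwa [one_div]

lemma conj_of_lt {r : ℝ} (hr : 1 < r) : (r/(r-1)).HolderConjugate r := by
  rw [Real.holderConjugate_iff]
  constructor
  · rw [lt_div_iff₀ (by linarith)]
    linarith
  · have h1 : (r/(r-1))⁻¹ = (r-1)/r := by
      rw [inv_div]
    rw [h1]
    field_simp
    ring

section Pmoves
variable {E : Type*} [NormedAddCommGroup E] [NormedSpace ℂ E] {r : ℝ} {s : ℝ≥0∞}

def memP (r q : ℝ) {n : ℕ} (lam : Fin n → StrongDual ℂ E) : Prop :=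
  ∀ y : Fin n → E, ∑ i, ‖lam i (y i)‖ ^ q ≤ (muP r y) ^ q

lemma memP_comp_perm (hr : 1 ≤ r) {q : ℝ} (hq : 0 < q) {n : ℕ}
    {lam : Fin n → StrongDual ℂ E} (h : memP r q lam) (σ : Equiv.Perm (Fin n)) :
    memP r q (lam ∘ σ) := by
  intro y
  calc ∑ i, ‖(lam ∘ σ) i (y i)‖ ^ q
      = ∑ i, ‖lam (σ i) ((y ∘ σ.symm) (σ i))‖ ^ q := by
        refine Finset.sum_congr rfl fun i _ => ?_
        simp
    _ = ∑ j, ‖lam j ((y ∘ σ.symm) j)‖ ^ q :=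
        Equiv.sum_comp σ (fun j => ‖lam j ((y ∘ σ.symm) j)‖ ^ q)
    _ ≤ (muP r (y ∘ σ.symm)) ^ q := h _
    _ ≤ (muP r y) ^ q := by
        apply Real.rpow_le_rpow (muP_nonneg hr _) ?_ hq.le
        apply muP_le_muP hr
        intro l _
        exact le_of_eq (Equiv.sum_comp σ.symm (fun j => ‖l (y j)‖ ^ r))

lemma memP_scale (hr : 1 ≤ r) {q : ℝ} (hq : 0 < q) {n : ℕ}
    {lam : Fin n → StrongDual ℂ E} (h : memP r q lam) (β : Fin n → ℂ)
    (hβ : ∀ i, ‖β i‖ ≤ 1) : memP r q (fun i => β i • lam i) := by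
  intro y
  have hr0 : (0:ℝ) < r := lt_of_lt_of_le zero_lt_one hr
  have e1 : ∀ i, ‖(β i • lam i) (y i)‖ = ‖lam i (β i • y i)‖ := by
    intro i
    rw [ContinuousLinearMap.smul_apply, ContinuousLinearMap.map_smul]
  calc ∑ i, ‖(β i • lam i) (y i)‖ ^ q
      = ∑ i, ‖lam i (β i • y i)‖ ^ q := by
        exact Finset.sum_congr rfl fun i _ => by rw [e1 i]
    _ ≤ (muP r (fun i => β i • y i)) ^ q := h _
    _ ≤ (muP r y) ^ q := by
        apply Real.rpow_le_rpow (muP_nonneg hr _) ?_ hq.le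
        apply muP_le_muP hr
        intro l _
        refine Finset.sum_le_sum fun i _ => ?_
        rw [ContinuousLinearMap.map_smul]
        rw [show ‖β i • l (y i)‖ = ‖β i‖ * ‖l (y i)‖ from norm_smul _ _]
        rw [Real.mul_rpow (norm_nonneg _) (norm_nonneg _)]
        apply mul_le_of_le_one_left (Real.rpow_nonneg (norm_nonneg _) _)
        exact Real.rpow_le_one (norm_nonneg _) (hβ i) hr0.le

lemma memP_castSucc (hr : 1 ≤ r) {q : ℝ} (hq : 0 < q) {n : ℕ}
    {lam : Fin (n+1) → StrongDual ℂ E} (h : memP r q lam) :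
    memP r q (fun i : Fin n => lam i.castSucc) := by
  intro y
  have hr0 : (0:ℝ) < r := lt_of_lt_of_le zero_lt_one hr
  have h1 := h (Fin.snoc y 0)
  rw [Fin.sum_univ_castSucc] at h1
  simp only [Fin.snoc_castSucc, Fin.snoc_last, map_zero, norm_zero] at h1
  rw [Real.zero_rpow (ne_of_gt hq), add_zero] at h1
  have h3 : muP r (Fin.snoc y (0:E)) ≤ muP r y := by
    apply muP_le_muP hr
    intro l _
    rw [Fin.sum_univ_castSucc]
    simp only [Fin.snoc_castSucc, Fin.snoc_last, map_zero, norm_zero]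
    rw [Real.zero_rpow (ne_of_gt hr0), add_zero]
  calc ∑ i : Fin n, ‖lam i.castSucc (y i)‖ ^ q
      ≤ (muP r (Fin.snoc y (0:E))) ^ q := h1
    _ ≤ (muP r y) ^ q := Real.rpow_le_rpow (muP_nonneg hr _) h3 hq.le

lemma memP_snoc_zero (hr : 1 ≤ r) {q : ℝ} (hq : 0 < q) {n : ℕ}
    {lam : Fin n → StrongDual ℂ E} (h : memP r q lam) :
    memP r q (Fin.snoc lam (0 : StrongDual ℂ E) : Fin (n+1) → _) := by
  intro Y
  rw [Fin.sum_univ_castSucc]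
  simp only [Fin.snoc_castSucc, Fin.snoc_last, ContinuousLinearMap.zero_apply, norm_zero]
  rw [Real.zero_rpow (ne_of_gt hq), add_zero]
  have h1 := h (fun i : Fin n => Y i.castSucc)
  have h2 : muP r (fun i : Fin n => Y i.castSucc) ≤ muP r Y := by
    apply muP_le_muP hr
    intro l _
    rw [Fin.sum_univ_castSucc (f := fun i : Fin (n+1) => ‖l (Y i)‖ ^ r)]
    have h4 : (0:ℝ) ≤ ‖l (Y (Fin.last n))‖ ^ r := Real.rpow_nonneg (norm_nonneg _) _
    linarith [le_refl (∑ i : Fin n, ‖l (Y i.castSucc)‖ ^ r)]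
  exact h1.trans (Real.rpow_le_rpow (muP_nonneg hr _) h2 hq.le)

lemma memP_avg (hr : 1 ≤ r) {q : ℝ} (hq1 : 1 ≤ q) {n : ℕ}
    {lam1 lam2 : Fin n → StrongDual ℂ E}
    (h1 : memP r q lam1) (h2 : memP r q lam2) :
    memP r q (fun i => (2:ℂ)⁻¹ • (lam1 i + lam2 i)) := by
  intro y
  have hq0 : (0:ℝ) < q := lt_of_lt_of_le zero_lt_one hq1
  set f := fun i => ‖lam1 i (y i)‖ with hf_def
  set g := fun i => ‖lam2 i (y i)‖ with hg_def
  have hfg : ∀ i, ‖((2:ℂ)⁻¹ • (lam1 i + lam2 i)) (y i)‖ ≤ f i / 2 + g i / 2 := by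
    intro i
    rw [ContinuousLinearMap.smul_apply, ContinuousLinearMap.add_apply, norm_smul]
    have : ‖(2:ℂ)⁻¹‖ = 1/2 := by
      rw [norm_inv]
      norm_num
    rw [this]
    calc 1/2 * ‖lam1 i (y i) + lam2 i (y i)‖ ≤ 1/2 * (f i + g i) := by
          apply mul_le_mul_of_nonneg_left (norm_add_le _ _) (by norm_num)
      _ = f i / 2 + g i / 2 := by ring
  have step1 : ∑ i, ‖((2:ℂ)⁻¹ • (lam1 i + lam2 i)) (y i)‖ ^ q
      ≤ ∑ i, (f i / 2 + g i / 2) ^ q := by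
    refine Finset.sum_le_sum fun i _ => ?_
    exact Real.rpow_le_rpow (norm_nonneg _) (hfg i) hq0.le
  have hf0 : ∀ i, 0 ≤ f i / 2 := fun i => by positivity
  have hg0 : ∀ i, 0 ≤ g i / 2 := fun i => by positivity
  have habs : ∀ i : Fin n, |f i / 2 + g i / 2| = f i / 2 + g i / 2 := fun i => by
    rw [abs_of_nonneg]
    have := hf0 i; have := hg0 i; linarith
  have habsf : ∀ i : Fin n, |f i / 2| = f i / 2 := fun i => abs_of_nonneg (hf0 i)
  have habsg : ∀ i : Fin n, |g i / 2| = g i / 2 := fun i => abs_of_nonneg (hg0 i)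
  have mink : (∑ i, (f i / 2 + g i / 2) ^ q) ^ (1/q)
      ≤ (∑ i, (f i / 2) ^ q) ^ (1/q) + (∑ i, (g i / 2) ^ q) ^ (1/q) := by
    have mk := Real.Lp_add_le Finset.univ (fun i => f i / 2) (fun i => g i / 2) hq1
    simp only [habs, habsf, habsg] at mk
    exact mk
  -- compute the two halves
  have hhalf : ∀ (u : Fin n → ℝ), (∀ i, 0 ≤ u i) →
      (∑ i, (u i / 2) ^ q) ^ (1/q) = (∑ i, (u i) ^ q) ^ (1/q) / 2 := by
    intro u hu
    have e1 : ∀ i, (u i / 2) ^ q = (u i) ^ q / (2:ℝ) ^ q := fun i =>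
      Real.div_rpow (hu i) (by norm_num : (0:ℝ) ≤ 2) q
    rw [Finset.sum_congr rfl fun i _ => e1 i, ← Finset.sum_div,
      Real.div_rpow (Finset.sum_nonneg fun i _ => Real.rpow_nonneg (hu i) _)
        (Real.rpow_nonneg (by norm_num) _),
      one_div, Real.rpow_rpow_inv (by norm_num) (ne_of_gt hq0)]
  have hF : (∑ i, (f i / 2) ^ q) ^ (1/q) ≤ muP r y / 2 := by
    rw [hhalf f (fun i => norm_nonneg _)]
    apply div_le_div_of_nonneg_right ?_ (by norm_num)
    · exact le_pow_form hq0
        (Finset.sum_nonneg fun i _ => Real.rpow_nonneg (norm_nonneg _) _)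
        (muP_nonneg hr y) (h1 y)
  have hG : (∑ i, (g i / 2) ^ q) ^ (1/q) ≤ muP r y / 2 := by
    rw [hhalf g (fun i => norm_nonneg _)]
    apply div_le_div_of_nonneg_right ?_ (by norm_num)
    · exact le_pow_form hq0
        (Finset.sum_nonneg fun i _ => Real.rpow_nonneg (norm_nonneg _) _)
        (muP_nonneg hr y) (h2 y)
  have step2 : (∑ i, (f i / 2 + g i / 2) ^ q) ^ (1/q) ≤ muP r y := by
    calc (∑ i, (f i / 2 + g i / 2) ^ q) ^ (1/q)
        ≤ (∑ i, (f i / 2) ^ q) ^ (1/q) + (∑ i, (g i / 2) ^ q) ^ (1/q) := mink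
      _ ≤ muP r y / 2 + muP r y / 2 := add_le_add hF hG
      _ = muP r y := by ring
  have step3 : ∑ i, (f i / 2 + g i / 2) ^ q ≤ (muP r y) ^ q :=
    pow_form_le hq0
      (Finset.sum_nonneg fun i _ => Real.rpow_nonneg (by positivity) _)
      (muP_nonneg hr y) step2
  exact step1.trans step3

end Pmoves


/-! ### the duplication move -/

lemma sum_split2 {M : Type*} [AddCommMonoid M] {n : ℕ} (f : Fin (n+2) → M) :
    ∑ i, f i = (∑ i : Fin n, f i.castSucc.castSucc)
      + f ((Fin.last n).castSucc) + f (Fin.last (n+1)) := by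
  rw [Fin.sum_univ_castSucc]
  rw [Fin.sum_univ_castSucc (f := fun i : Fin (n+1) => f i.castSucc)]

section Dup
variable {E : Type*} [NormedAddCommGroup E] [NormedSpace ℂ E] {r : ℝ}

lemma memP_snoc_dup (hr : 1 ≤ r) {q : ℝ} (hq1 : 1 ≤ q) (hrq : r ≤ q) {n : ℕ}
    {lam : Fin (n+1) → StrongDual ℂ E} (h : memP r q lam) :
    memP r q (Fin.snoc lam (lam (Fin.last n)) : Fin (n+2) → _) := by
  intro Y
  have hr0 : (0:ℝ) < r := lt_of_lt_of_le zero_lt_one hr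
  have hq0 : (0:ℝ) < q := lt_of_lt_of_le zero_lt_one hq1
  set μ := lam (Fin.last n) with hμ_def
  set u := Y ((Fin.last n).castSucc) with hu_def
  set v := Y (Fin.last (n+1)) with hv_def
  set w : Fin n → E := fun i => Y i.castSucc.castSucc with hw_def
  have hsplit : ∑ i : Fin (n+2),
        ‖(Fin.snoc lam μ : Fin (n+2) → StrongDual ℂ E) i (Y i)‖ ^ q
      = (∑ i : Fin n, ‖lam i.castSucc (w i)‖ ^ q) + ‖μ u‖ ^ q + ‖μ v‖ ^ q := by
    rw [sum_split2 (f := fun i : Fin (n+2) =>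
      ‖(Fin.snoc lam μ : Fin (n+2) → StrongDual ℂ E) i (Y i)‖ ^ q)]
    simp only [Fin.snoc_castSucc, Fin.snoc_last]
    rfl
  rw [hsplit]
  by_cases hS : ‖μ u‖ ^ r + ‖μ v‖ ^ r = 0
  · have hau : ‖μ u‖ = 0 := by
      by_contra hne
      have hpos : 0 < ‖μ u‖ := lt_of_le_of_ne (norm_nonneg _) (Ne.symm hne)
      have h1 := Real.rpow_pos_of_pos hpos r
      have h2 := Real.rpow_nonneg (norm_nonneg (μ v)) r
      linarith
    have hav : ‖μ v‖ = 0 := by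
      by_contra hne
      have hpos : 0 < ‖μ v‖ := lt_of_le_of_ne (norm_nonneg _) (Ne.symm hne)
      have h1 := Real.rpow_pos_of_pos hpos r
      have h2 := Real.rpow_nonneg (norm_nonneg (μ u)) r
      linarith
    rw [hau, hav, Real.zero_rpow (ne_of_gt hq0), add_zero, add_zero]
    have hmain := h (Fin.snoc w (0:E))
    have hsp2 : ∑ i : Fin (n+1), ‖lam i ((Fin.snoc w (0:E) : Fin (n+1) → E) i)‖ ^ q
        = (∑ i : Fin n, ‖lam i.castSucc (w i)‖ ^ q) + ‖μ (0:E)‖ ^ q := by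
      rw [Fin.sum_univ_castSucc (f := fun i : Fin (n+1) =>
        ‖lam i ((Fin.snoc w (0:E) : Fin (n+1) → E) i)‖ ^ q)]
      simp only [Fin.snoc_castSucc, Fin.snoc_last]
      rfl
    rw [hsp2, map_zero, norm_zero, Real.zero_rpow (ne_of_gt hq0), add_zero] at hmain
    have hmu0 : muP r (Fin.snoc w (0:E) : Fin (n+1) → E) ≤ muP r Y := by
      apply muP_le_muP hr
      intro l _
      rw [Fin.sum_univ_castSucc (f := fun i : Fin (n+1) =>
        ‖l ((Fin.snoc w (0:E) : Fin (n+1) → E) i)‖ ^ r)]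
      simp only [Fin.snoc_castSucc, Fin.snoc_last, map_zero, norm_zero]
      rw [Real.zero_rpow (ne_of_gt hr0), add_zero]
      rw [sum_split2 (f := fun i : Fin (n+2) => ‖l (Y i)‖ ^ r)]
      have hww : (∑ i : Fin n, ‖l (Y i.castSucc.castSucc)‖ ^ r)
          = ∑ i : Fin n, ‖l (w i)‖ ^ r := rfl
      have p1 : (0:ℝ) ≤ ‖l (Y ((Fin.last n).castSucc))‖ ^ r :=
        Real.rpow_nonneg (norm_nonneg _) _
      have p2 : (0:ℝ) ≤ ‖l (Y (Fin.last (n+1)))‖ ^ r :=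
        Real.rpow_nonneg (norm_nonneg _) _
      linarith
    exact hmain.trans (Real.rpow_le_rpow (muP_nonneg hr _) hmu0 hq0.le)
  · set a := ‖μ u‖ with ha_def
    set b := ‖μ v‖ with hb_def
    have ha0 : 0 ≤ a := norm_nonneg _
    have hb0 : 0 ≤ b := norm_nonneg _
    have hSpos : 0 < a ^ r + b ^ r := by
      rcases lt_or_eq_of_le (add_nonneg (Real.rpow_nonneg ha0 r)
        (Real.rpow_nonneg hb0 r)) with h1 | h1
      · exact h1
      · exact absurd h1.symm hS
    set D := (a ^ r + b ^ r) ^ (1/r) with hD_def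
    have hD0 : 0 < D := Real.rpow_pos_of_pos hSpos _
    have hDr : D ^ r = a ^ r + b ^ r := by
      rw [hD_def, one_div, Real.rpow_inv_rpow (le_of_lt hSpos) (ne_of_gt hr0)]
    set ζ : ℂ := (((a/D) ^ (r-1) : ℝ) : ℂ) * phase (μ u) with hζ_def
    set η : ℂ := (((b/D) ^ (r-1) : ℝ) : ℂ) * phase (μ v) with hη_def
    set u' : E := ζ • u + η • v with hu'_def
    have hreal : (a/D) ^ (r-1) * a + (b/D) ^ (r-1) * b = D := by
      have e1 : (a/D) ^ (r-1) * a = a ^ r / D ^ (r-1) := by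
        rw [Real.div_rpow ha0 hD0.le, div_mul_eq_mul_div]
        congr 1
        rw [show a ^ (r-1) * a = a ^ (r-1) * a ^ (1:ℝ) by rw [Real.rpow_one]]
        rw [← Real.rpow_add' ha0 (by rw [sub_add_cancel]; exact ne_of_gt hr0)]
        rw [sub_add_cancel]
      have e2 : (b/D) ^ (r-1) * b = b ^ r / D ^ (r-1) := by
        rw [Real.div_rpow hb0 hD0.le, div_mul_eq_mul_div]
        congr 1
        rw [show b ^ (r-1) * b = b ^ (r-1) * b ^ (1:ℝ) by rw [Real.rpow_one]]
        rw [← Real.rpow_add' hb0 (by rw [sub_add_cancel]; exact ne_of_gt hr0)]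
        rw [sub_add_cancel]
      rw [e1, e2, ← add_div, ← hDr, ← Real.rpow_sub hD0]
      rw [show r - (r-1) = 1 by ring, Real.rpow_one]
    have hμu' : μ u' = ((D : ℝ) : ℂ) := by
      rw [hu'_def, map_add, ContinuousLinearMap.map_smul, ContinuousLinearMap.map_smul]
      rw [hζ_def, hη_def, smul_eq_mul, smul_eq_mul, mul_assoc, mul_assoc,
        phase_mul, phase_mul]
      rw [← Complex.ofReal_mul, ← Complex.ofReal_mul, ← Complex.ofReal_add]
      exact congrArg Complex.ofReal hreal
    have hq_ineq : a ^ q + b ^ q ≤ D ^ q := by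
      have hqr1 : 1 ≤ q / r := by
        rw [le_div_iff₀ hr0]
        linarith
      have e1 : a ^ q = (a ^ r) ^ (q/r) := by
        rw [← Real.rpow_mul ha0]
        congr 1
        rw [mul_comm r (q/r), div_mul_cancel₀ q (ne_of_gt hr0)]
      have e2 : b ^ q = (b ^ r) ^ (q/r) := by
        rw [← Real.rpow_mul hb0]
        congr 1
        rw [mul_comm r (q/r), div_mul_cancel₀ q (ne_of_gt hr0)]
      have e3 : (a ^ r + b ^ r) ^ (q/r) = D ^ q := by
        rw [← hDr, ← Real.rpow_mul hD0.le]
        congr 1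
        rw [mul_comm r (q/r), div_mul_cancel₀ q (ne_of_gt hr0)]
      rw [e1, e2, ← e3]
      exact add_rpow_le_rpow_add' (Real.rpow_nonneg ha0 _) (Real.rpow_nonneg hb0 _) hqr1
    have hζn : ‖ζ‖ ≤ (a/D) ^ (r-1) := by
      rw [hζ_def, norm_mul, Complex.norm_real,
        Real.norm_of_nonneg (Real.rpow_nonneg (by positivity) _)]
      exact mul_le_of_le_one_right (Real.rpow_nonneg (by positivity) _) (norm_phase_le _)
    have hηn : ‖η‖ ≤ (b/D) ^ (r-1) := by
      rw [hη_def, norm_mul, Complex.norm_real,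
        Real.norm_of_nonneg (Real.rpow_nonneg (by positivity) _)]
      exact mul_le_of_le_one_right (Real.rpow_nonneg (by positivity) _) (norm_phase_le _)
    have hweight : ∀ c1 c2 : ℝ, 0 ≤ c1 → 0 ≤ c2 →
        (a/D) ^ (r-1) * c1 + (b/D) ^ (r-1) * c2 ≤ (c1 ^ r + c2 ^ r) ^ (1/r) := by
      intro c1 c2 hc1 hc2
      rcases eq_or_lt_of_le hr with hre | hrl
      · rw [← hre]
        norm_num
      · have hpq := conj_of_lt hrl
        have hr1ne : r - 1 ≠ 0 := ne_of_gt (by linarith)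
        set F : Fin 2 → ℝ := fun i => if i = 0 then (a/D) ^ (r-1) else (b/D) ^ (r-1)
          with hF_def
        set G : Fin 2 → ℝ := fun i => if i = 0 then c1 else c2 with hG_def
        have key := Real.inner_le_Lp_mul_Lq_of_nonneg (Finset.univ : Finset (Fin 2)) hpq
          (f := F) (g := G)
          (fun i _ => by by_cases hi : i = 0 <;>
            simp [hF_def, hi, Real.rpow_nonneg (div_nonneg ha0 hD0.le),
              Real.rpow_nonneg (div_nonneg hb0 hD0.le)])
          (fun i _ => by by_cases hi : i = 0 <;> simp [hG_def, hi, hc1, hc2])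
        rw [Fin.sum_univ_two, Fin.sum_univ_two, Fin.sum_univ_two] at key
        simp only [hF_def, hG_def] at key
        norm_num at key
        have eF : ((a/D) ^ (r-1)) ^ (r/(r-1)) + ((b/D) ^ (r-1)) ^ (r/(r-1)) = 1 := by
          rw [← Real.rpow_mul (div_nonneg ha0 hD0.le), ← Real.rpow_mul (div_nonneg hb0 hD0.le)]
          rw [show (r-1) * (r/(r-1)) = r by field_simp]
          rw [Real.div_rpow ha0 hD0.le, Real.div_rpow hb0 hD0.le, ← add_div, hDr,
            div_self (ne_of_gt hSpos)]
        rw [eF] at key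
        rw [Real.one_rpow, one_mul] at key
        rw [one_div]
        exact key
    have hl_bound : ∀ l : StrongDual ℂ E, ‖l u'‖ ^ r ≤ ‖l u‖ ^ r + ‖l v‖ ^ r := by
      intro l
      have h1 : ‖l u'‖ ≤ (‖l u‖ ^ r + ‖l v‖ ^ r) ^ (1/r) := by
        calc ‖l u'‖ ≤ ‖ζ‖ * ‖l u‖ + ‖η‖ * ‖l v‖ := by
              rw [hu'_def, map_add, ContinuousLinearMap.map_smul,
                ContinuousLinearMap.map_smul]
              calc ‖ζ • l u + η • l v‖ ≤ ‖ζ • l u‖ + ‖η • l v‖ := norm_add_le _ _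
                _ = ‖ζ‖ * ‖l u‖ + ‖η‖ * ‖l v‖ := by rw [norm_smul, norm_smul]
          _ ≤ (a/D) ^ (r-1) * ‖l u‖ + (b/D) ^ (r-1) * ‖l v‖ :=
              add_le_add (mul_le_mul_of_nonneg_right hζn (norm_nonneg _))
                (mul_le_mul_of_nonneg_right hηn (norm_nonneg _))
          _ ≤ (‖l u‖ ^ r + ‖l v‖ ^ r) ^ (1/r) :=
              hweight _ _ (norm_nonneg _) (norm_nonneg _)
      have h2 := Real.rpow_le_rpow (norm_nonneg _) h1 hr0.le
      rwa [one_div, Real.rpow_inv_rpow (by positivity) (ne_of_gt hr0)] at h2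
    have hmu : muP r (Fin.snoc w u' : Fin (n+1) → E) ≤ muP r Y := by
      apply muP_le_muP hr
      intro l _
      rw [Fin.sum_univ_castSucc (f := fun i : Fin (n+1) =>
        ‖l ((Fin.snoc w u' : Fin (n+1) → E) i)‖ ^ r)]
      simp only [Fin.snoc_castSucc, Fin.snoc_last]
      rw [sum_split2 (f := fun i : Fin (n+2) => ‖l (Y i)‖ ^ r)]
      have hww : (∑ i : Fin n, ‖l (Y i.castSucc.castSucc)‖ ^ r)
          = ∑ i : Fin n, ‖l (w i)‖ ^ r := rfl
      linarith [hl_bound l]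
    have hmain := h (Fin.snoc w u')
    have hsp2 : ∑ i : Fin (n+1), ‖lam i ((Fin.snoc w u' : Fin (n+1) → E) i)‖ ^ q
        = (∑ i : Fin n, ‖lam i.castSucc (w i)‖ ^ q) + ‖μ u'‖ ^ q := by
      rw [Fin.sum_univ_castSucc (f := fun i : Fin (n+1) =>
        ‖lam i ((Fin.snoc w u' : Fin (n+1) → E) i)‖ ^ q)]
      simp only [Fin.snoc_castSucc, Fin.snoc_last]
      rfl
    rw [hsp2] at hmain
    have hμu'n : ‖μ u'‖ = D := by
      rw [hμu', Complex.norm_real, Real.norm_of_nonneg hD0.le]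
    rw [hμu'n] at hmain
    calc (∑ i : Fin n, ‖lam i.castSucc (w i)‖ ^ q) + a ^ q + b ^ q
        ≤ (∑ i : Fin n, ‖lam i.castSucc (w i)‖ ^ q) + D ^ q := by linarith
      _ ≤ muP r (Fin.snoc w u' : Fin (n+1) → E) ^ q := hmain
      _ ≤ muP r Y ^ q := Real.rpow_le_rpow (muP_nonneg hr _) hmu hq0.le

end Dup

end Stmt3


/-- for `1 ≤ r < ∞` and `1 < s ≤ r'` (conjugate exponent, `r' = ∞` when `r = 1`;
the condition `s ≤ r'` is encoded as `1 ≤ 1/s + 1/r` in `ℝ≥0∞`), the family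
`(⦀·⦀_n^{(r,s)})_n` is a dual multi-norm over `E`: each level is a norm on `E^n`, level `1`
is the norm of `E`, and axioms (A1), (A2), (A3) and (B4) hold. -/
theorem stmt3 (r : ℝ) (s : ℝ≥0∞) (hr : 1 ≤ r) (hs : 1 < s)
    (hsr : 1 ≤ s⁻¹ + (ENNReal.ofReal r)⁻¹)
    (E : Type*) [NormedAddCommGroup E] [NormedSpace ℂ E] [CompleteSpace E] :
    -- each `⦀·⦀_n^{(r,s)}` is a norm on `E^n`:
    (∀ (n : ℕ) (x : Fin n → E), dualNorm r s x = 0 ↔ x = 0) ∧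
    (∀ (n : ℕ) (x y : Fin n → E), dualNorm r s (x + y) ≤ dualNorm r s x + dualNorm r s y) ∧
    (∀ (n : ℕ) (c : ℂ) (x : Fin n → E), dualNorm r s (c • x) = ‖c‖ * dualNorm r s x) ∧
    -- `⦀·⦀_1^{(r,s)}` is the norm of `E`:
    (∀ x : E, dualNorm r s (fun _ : Fin 1 => x) = ‖x‖) ∧
    -- (A1):
    (∀ (n : ℕ) (σ : Equiv.Perm (Fin n)) (x : Fin n → E),
      dualNorm r s (x ∘ σ) = dualNorm r s x) ∧
    -- (A2):
    (∀ (n : ℕ) (α : Fin (n + 1) → ℂ) (x : Fin (n + 1) → E),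
      dualNorm r s (fun i => α i • x i) ≤ (⨆ i, ‖α i‖) * dualNorm r s x) ∧
    -- (A3):
    (∀ (n : ℕ) (x : Fin (n + 1) → E),
      dualNorm r s (Fin.snoc x (0 : E)) = dualNorm r s x) ∧
    -- (B4):
    (∀ (n : ℕ) (x : Fin (n + 1) → E),
      dualNorm r s (Fin.snoc x (x (Fin.last n))) =
        dualNorm r s (Function.update x (Fin.last n) ((2 : ℂ) • x (Fin.last n)))) := by
  have hq1 : 1 ≤ Stmt3.qe s := Stmt3.one_le_qe hs
  have hq0 : (0:ℝ) < Stmt3.qe s := Stmt3.qe_pos hs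
  have hrq : r ≤ Stmt3.qe s := Stmt3.r_le_qe hr hs hsr
  -- (A1) as a one-sided lemma first
  have hperm_le : ∀ (n : ℕ) (σ : Equiv.Perm (Fin n)) (x : Fin n → E),
      dualNorm r s (x ∘ σ) ≤ dualNorm r s x := by
    intro n σ x
    obtain ⟨lam, hP, hval⟩ := Stmt3.exists_P_rep hr hs (x ∘ σ)
    have hP' : Stmt3.memP r (Stmt3.qe s) (lam ∘ σ.symm) :=
      Stmt3.memP_comp_perm hr hq0 hP σ.symm
    have hsum : ∑ j, (lam ∘ σ.symm) j (x j) = ∑ i, lam i ((x ∘ σ) i) := by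
      have h1 := Equiv.sum_comp σ (fun j => (lam ∘ σ.symm) j (x j))
      rw [← h1]
      refine Finset.sum_congr rfl fun i _ => ?_
      simp
    calc dualNorm r s (x ∘ σ) = ‖∑ i, lam i ((x ∘ σ) i)‖ := hval.symm
      _ = ‖∑ j, (lam ∘ σ.symm) j (x j)‖ := by rw [hsum]
      _ ≤ dualNorm r s x := Stmt3.le_dualNorm_of_P hr hs _ hP' x
  refine ⟨fun n x => Stmt3.dualNorm_eq_zero_iff hr hs x,
    fun n x y => Stmt3.dualNorm_add_le hr x y,
    fun n c x => Stmt3.dualNorm_smul hr hs c x,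
    ?_, ?_, ?_, ?_, ?_⟩
  · -- level 1
    intro x
    apply le_antisymm
    · have h := Stmt3.dualNorm_single_term (s := s) hr
        (fun _ : Fin 1 => (1:ℂ)) (fun _ : Fin 1 => x)
      rw [Stmt3.lsNorm_one1 hs, one_mul, Stmt3.muP_const1 hr] at h
      have he : (fun i : Fin 1 => (1:ℂ) • x) = (fun _ : Fin 1 => x) :=
        funext fun i => one_smul ℂ x
      rwa [he] at h
    · exact Stmt3.norm_le_dualNorm hr hs (fun _ : Fin 1 => x) 0
  · -- (A1)
    intro n σ x
    apply le_antisymm (hperm_le n σ x)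
    have h1 := hperm_le n σ.symm (x ∘ σ)
    have he : (x ∘ σ) ∘ σ.symm = x := by
      funext i
      simp
    rwa [he] at h1
  · -- (A2)
    intro n α x
    rcases eq_or_lt_of_le (Real.iSup_nonneg (fun i => norm_nonneg (α i))) with hM | hM
    · have hzero : ∀ i, α i = 0 := by
        intro i
        have h1 : ‖α i‖ ≤ ⨆ j, ‖α j‖ :=
          le_ciSup (f := fun j => ‖α j‖) (Set.Finite.bddAbove (Set.finite_range _)) i
        have h2 : ‖α i‖ = 0 := le_antisymm (h1.trans (le_of_eq hM.symm)) (norm_nonneg _)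
        exact norm_eq_zero.1 h2
      have he : (fun i => α i • x i) = (0 : Fin (n+1) → E) := funext fun i => by
        rw [hzero i, zero_smul]
        rfl
      rw [he, Stmt3.dualNorm_zero hr, ← hM, zero_mul]
    · set M := ⨆ i, ‖α i‖ with hM_def
      obtain ⟨lam, hP, hval⟩ := Stmt3.exists_P_rep hr hs (fun i => α i • x i)
      set β : Fin (n+1) → ℂ := fun i => ((M⁻¹ : ℝ) : ℂ) * α i with hβ_def
      have hβ : ∀ i, ‖β i‖ ≤ 1 := by
        intro i
        rw [hβ_def]
        rw [norm_mul, Complex.norm_real, Real.norm_of_nonneg (inv_nonneg.2 hM.le)]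
        rw [inv_mul_le_iff₀ hM, mul_one]
        exact le_ciSup (f := fun j => ‖α j‖) (Set.Finite.bddAbove (Set.finite_range _)) i
      have hP' := Stmt3.memP_scale hr hq0 hP β hβ
      have hle := Stmt3.le_dualNorm_of_P hr hs _ hP' x
      have hvv : ∑ i, (β i • lam i) (x i)
          = ((M⁻¹ : ℝ) : ℂ) * ∑ i, lam i (α i • x i) := by
        rw [Finset.mul_sum]
        refine Finset.sum_congr rfl fun i _ => ?_
        rw [ContinuousLinearMap.smul_apply, ContinuousLinearMap.map_smul, hβ_def]
        rw [smul_eq_mul, smul_eq_mul]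
        ring
      rw [hvv, norm_mul] at hle
      have hM' : ‖((M⁻¹ : ℝ) : ℂ)‖ = M⁻¹ := by
        rw [Complex.norm_real, Real.norm_of_nonneg (inv_nonneg.2 hM.le)]
      rw [hM', hval] at hle
      calc dualNorm r s (fun i => α i • x i)
          = M * (M⁻¹ * dualNorm r s (fun i => α i • x i)) := by
            rw [← mul_assoc, mul_inv_cancel₀ (ne_of_gt hM), one_mul]
        _ ≤ M * dualNorm r s x := mul_le_mul_of_nonneg_left hle hM.le
  · -- (A3)
    intro n x
    apply le_antisymm
    · obtain ⟨lam, hP, hval⟩ := Stmt3.exists_P_rep hr hs (Fin.snoc x (0:E) : Fin (n+2) → E)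
      have hP' := Stmt3.memP_castSucc hr hq0 hP
      have hsum : ∑ i : Fin (n+1), lam i.castSucc (x i)
          = ∑ i : Fin (n+2), lam i ((Fin.snoc x (0:E) : Fin (n+2) → E) i) := by
        rw [Fin.sum_univ_castSucc (f := fun i : Fin (n+2) =>
          lam i ((Fin.snoc x (0:E) : Fin (n+2) → E) i))]
        simp only [Fin.snoc_castSucc, Fin.snoc_last, map_zero, add_zero]
      calc dualNorm r s (Fin.snoc x (0:E) : Fin (n+2) → E)
          = ‖∑ i : Fin (n+2), lam i ((Fin.snoc x (0:E) : Fin (n+2) → E) i)‖ := hval.symm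
        _ = ‖∑ i : Fin (n+1), lam i.castSucc (x i)‖ := by rw [hsum]
        _ ≤ dualNorm r s x := Stmt3.le_dualNorm_of_P hr hs _ hP' x
    · obtain ⟨lam, hP, hval⟩ := Stmt3.exists_P_rep hr hs x
      have hP' := Stmt3.memP_snoc_zero hr hq0 hP
      have hsum : ∑ i : Fin (n+2),
            (Fin.snoc lam (0 : StrongDual ℂ E) : Fin (n+2) → _) i
              ((Fin.snoc x (0:E) : Fin (n+2) → E) i)
          = ∑ i : Fin (n+1), lam i (x i) := by
        rw [Fin.sum_univ_castSucc (f := fun i : Fin (n+2) =>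
          (Fin.snoc lam (0 : StrongDual ℂ E) : Fin (n+2) → _) i
            ((Fin.snoc x (0:E) : Fin (n+2) → E) i))]
        simp only [Fin.snoc_castSucc, Fin.snoc_last, ContinuousLinearMap.zero_apply, add_zero]
      calc dualNorm r s x = ‖∑ i : Fin (n+1), lam i (x i)‖ := hval.symm
        _ = ‖∑ i : Fin (n+2),
              (Fin.snoc lam (0 : StrongDual ℂ E) : Fin (n+2) → _) i
                ((Fin.snoc x (0:E) : Fin (n+2) → E) i)‖ := by rw [hsum]
        _ ≤ dualNorm r s (Fin.snoc x (0:E) : Fin (n+2) → E) :=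
            Stmt3.le_dualNorm_of_P hr hs _ hP' _
  · -- (B4)
    intro n x
    set z := x (Fin.last n) with hz_def
    set X : Fin (n+2) → E := Fin.snoc x z with hX_def
    set X' : Fin (n+1) → E := Function.update x (Fin.last n) ((2:ℂ) • z) with hX'_def
    have hcsl_ne : ∀ i : Fin n, i.castSucc ≠ Fin.last n :=
      fun i => ne_of_lt (Fin.castSucc_lt_last i)
    have hXcc : ∀ i : Fin n, X i.castSucc.castSucc = x i.castSucc := fun i => by
      rw [hX_def]
      exact Fin.snoc_castSucc _ _ _
    have hXcsl : X ((Fin.last n).castSucc) = z := by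
      rw [hX_def]
      exact Fin.snoc_castSucc _ _ _
    have hXl : X (Fin.last (n+1)) = z := by
      rw [hX_def]
      exact Fin.snoc_last _ _
    have hX'c : ∀ i : Fin n, X' i.castSucc = x i.castSucc := fun i => by
      rw [hX'_def]
      exact Function.update_of_ne (hcsl_ne i) _ _
    have hX'l : X' (Fin.last n) = (2:ℂ) • z := by
      rw [hX'_def]
      exact Function.update_self _ _ _
    apply le_antisymm
    · -- dualNorm X ≤ dualNorm X'
      obtain ⟨lam, hP, hval⟩ := Stmt3.exists_P_rep hr hs X
      set σ : Equiv.Perm (Fin (n+2)) :=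
        Equiv.swap ((Fin.last n).castSucc) (Fin.last (n+1)) with hσ_def
      have hPσ := Stmt3.memP_comp_perm hr hq0 hP σ
      have hPavg : Stmt3.memP r (Stmt3.qe s)
          (fun i => (2:ℂ)⁻¹ • (lam i + lam (σ i))) :=
        Stmt3.memP_avg hr hq1 hP hPσ
      have hP' := Stmt3.memP_castSucc hr hq0 hPavg
      have hσ1 : σ ((Fin.last n).castSucc) = Fin.last (n+1) := Equiv.swap_apply_left _ _
      have hσ2 : σ (Fin.last (n+1)) = (Fin.last n).castSucc := Equiv.swap_apply_right _ _
      have hσ3 : ∀ i : Fin n, σ i.castSucc.castSucc = i.castSucc.castSucc := by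
        intro i
        apply Equiv.swap_apply_of_ne_of_ne
        · intro hcon
          exact hcsl_ne i (Fin.castSucc_injective _ hcon)
        · exact ne_of_lt (Fin.castSucc_lt_last _)
      have hsum : ∑ i : Fin (n+1),
            ((2:ℂ)⁻¹ • (lam i.castSucc + lam (σ i.castSucc))) (X' i)
          = ∑ i : Fin (n+2), lam i (X i) := by
        rw [Stmt3.sum_split2 (f := fun i : Fin (n+2) => lam i (X i))]
        rw [Fin.sum_univ_castSucc (f := fun i : Fin (n+1) =>
          ((2:ℂ)⁻¹ • (lam i.castSucc + lam (σ i.castSucc))) (X' i))]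
        have e1 : ∀ i : Fin n,
            ((2:ℂ)⁻¹ • (lam i.castSucc.castSucc + lam (σ i.castSucc.castSucc))) (X' i.castSucc)
            = lam i.castSucc.castSucc (X i.castSucc.castSucc) := by
          intro i
          rw [hσ3 i, hX'c i, hXcc i]
          rw [ContinuousLinearMap.smul_apply, ContinuousLinearMap.add_apply, smul_eq_mul]
          ring
        have e2 : ((2:ℂ)⁻¹ • (lam (Fin.last n).castSucc + lam (σ (Fin.last n).castSucc)))
              (X' (Fin.last n))
            = lam ((Fin.last n).castSucc) (X ((Fin.last n).castSucc))
              + lam (Fin.last (n+1)) (X (Fin.last (n+1))) := by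
          rw [hσ1, hX'l, hXcsl, hXl]
          rw [ContinuousLinearMap.smul_apply, ContinuousLinearMap.add_apply]
          rw [ContinuousLinearMap.map_smul, ContinuousLinearMap.map_smul]
          rw [smul_eq_mul, smul_eq_mul, smul_eq_mul]
          ring
        rw [Finset.sum_congr rfl fun i _ => e1 i, e2]
        ring
      calc dualNorm r s X = ‖∑ i : Fin (n+2), lam i (X i)‖ := hval.symm
        _ = ‖∑ i : Fin (n+1), ((2:ℂ)⁻¹ • (lam i.castSucc + lam (σ i.castSucc))) (X' i)‖ := by
            rw [hsum]
        _ ≤ dualNorm r s X' := Stmt3.le_dualNorm_of_P hr hs _ hP' X'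
    · -- dualNorm X' ≤ dualNorm X
      obtain ⟨lam, hP, hval⟩ := Stmt3.exists_P_rep hr hs X'
      have hP' := Stmt3.memP_snoc_dup hr hq1 hrq hP
      have hsum : ∑ i : Fin (n+2),
            (Fin.snoc lam (lam (Fin.last n)) : Fin (n+2) → _) i (X i)
          = ∑ i : Fin (n+1), lam i (X' i) := by
        rw [Stmt3.sum_split2 (f := fun i : Fin (n+2) =>
          (Fin.snoc lam (lam (Fin.last n)) : Fin (n+2) → _) i (X i))]
        rw [Fin.sum_univ_castSucc (f := fun i : Fin (n+1) => lam i (X' i))]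
        have e1 : ∀ i : Fin n,
            (Fin.snoc lam (lam (Fin.last n)) : Fin (n+2) → _) i.castSucc.castSucc
              (X i.castSucc.castSucc)
            = lam i.castSucc (X' i.castSucc) := by
          intro i
          rw [hXcc i, hX'c i, Fin.snoc_castSucc]
        have e2 : (Fin.snoc lam (lam (Fin.last n)) : Fin (n+2) → _) ((Fin.last n).castSucc)
              (X ((Fin.last n).castSucc))
            = lam (Fin.last n) z := by
          rw [hXcsl, Fin.snoc_castSucc]
        have e3 : (Fin.snoc lam (lam (Fin.last n)) : Fin (n+2) → _) (Fin.last (n+1))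
              (X (Fin.last (n+1)))
            = lam (Fin.last n) z := by
          rw [hXl, Fin.snoc_last]
        rw [Finset.sum_congr rfl fun i _ => e1 i, e2, e3, hX'l]
        rw [ContinuousLinearMap.map_smul, smul_eq_mul]
        ring
      calc dualNorm r s X' = ‖∑ i : Fin (n+1), lam i (X' i)‖ := hval.symm
        _ = ‖∑ i : Fin (n+2),
              (Fin.snoc lam (lam (Fin.last n)) : Fin (n+2) → _) i (X i)‖ := by rw [hsum]
        _ ≤ dualNorm r s X := Stmt3.le_dualNorm_of_P hr hs _ hP' X
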